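/- Let π : (0,∞) → (0,∞) be a continuously differentiable probability density with ∫₀^1 |u π'(u)| du < ∞ and such that lim_{u→∞} u π'(u)/π(u) exists in [-∞,∞]. Then lim_{u→0⁺} u π(u) = 0 and lim_{u→∞} u π(u) = 0. -/

import Mathlib

open Real Set Filter MeasureTheory Topology

private lemma upi_hasDeriv {pdf : ℝ → ℝ} (hC1 : ContDiffOn ℝ 1 pdf (Set.Ioi 0))
    {u : ℝ} (hu : 0 < u) :
    HasDerivAt (fun x => x * pdf x) (pdf u + u * deriv pdf u) u := by
  have hd : DifferentiableAt ℝ pdf u :=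
    ((hC1.differentiableOn one_ne_zero) u hu).differentiableAt (Ioi_mem_nhds hu)
  have := (hasDerivAt_id u).mul hd.hasDerivAt
  exact this.congr_deriv (by simp)

private lemma pdf_deriv_meas {pdf : ℝ → ℝ} : Measurable (fun u : ℝ => u * deriv pdf u) :=
  measurable_id.mul (measurable_deriv pdf)

/-- If `u * pdf u` tends to `L` at `+∞` and `pdf` is integrable near `∞`, then `L = 0`. -/
private lemma limit_zero_atTop {pdf : ℝ → ℝ} {a L : ℝ} (ha : 0 < a)
    (hpos : ∀ u ∈ Set.Ioi (0:ℝ), 0 < pdf u)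
    (hInt : IntegrableOn pdf (Set.Ioi a))
    (hL : Tendsto (fun u => u * pdf u) atTop (nhds L)) : L = 0 := by
  have hL0 : 0 ≤ L := by
    refine ge_of_tendsto hL ?_
    filter_upwards [eventually_gt_atTop (0:ℝ)] with u hu
    exact (mul_pos hu (hpos u hu)).le
  rcases hL0.lt_or_eq with h | h
  · exfalso
    have hev : ∀ᶠ u in atTop, L / 2 < u * pdf u :=
      hL.eventually (eventually_gt_nhds (by linarith))
    obtain ⟨b, hb⟩ := eventually_atTop.mp (hev.and (eventually_ge_atTop (max a 1)))
    set c := max b (max a 1) with hc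
    have hca : a ≤ c := le_trans (le_max_left _ _) (le_max_right _ _)
    have hc1 : (1:ℝ) ≤ c := le_trans (le_max_right _ _) (le_max_right _ _)
    have hc0 : 0 < c := lt_of_lt_of_le one_pos hc1
    have key : IntegrableOn (fun x : ℝ => x⁻¹) (Set.Ioi c) := by
      refine Integrable.mono ((hInt.mono_set (Ioi_subset_Ioi hca)).const_mul (2 / L))
        measurable_inv.aestronglyMeasurable ?_
      filter_upwards [ae_restrict_mem measurableSet_Ioi] with x hx
      have hx0 : (0:ℝ) < x := lt_trans hc0 hx
      have hbnd := (hb x (le_trans (le_max_left _ _) hx.le)).1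
      have hpx : 0 < pdf x := hpos x hx0
      have h2L : (0:ℝ) < 2 / L := by positivity
      rw [Real.norm_eq_abs, Real.norm_eq_abs, abs_of_pos (inv_pos.mpr hx0),
        abs_of_pos (mul_pos h2L hpx), inv_eq_one_div, div_le_iff₀ hx0]
      calc (1:ℝ) = 2 / L * (L / 2) := by field_simp
        _ ≤ 2 / L * (x * pdf x) := mul_le_mul_of_nonneg_left hbnd.le h2L.le
        _ = 2 / L * pdf x * x := by ring
    have key' : IntegrableOn (fun x : ℝ => x ^ (-1:ℝ)) (Set.Ioi c) := by
      refine key.congr_fun (fun x hx => ?_) measurableSet_Ioi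
      have hx0 : (0:ℝ) < x := lt_trans hc0 hx
      rw [show x ^ (-1:ℝ) = (x ^ (1:ℝ))⁻¹ from Real.rpow_neg hx0.le 1, Real.rpow_one]
    rw [integrableOn_Ioi_rpow_iff hc0] at key'
    linarith
  · exact h.symm

/-- If `u * pdf u` tends to `L` at `0⁺` and `pdf` is integrable on `(0,1)`, then `L = 0`. -/
private lemma limit_zero_atZero {pdf : ℝ → ℝ} {L : ℝ}
    (hpos : ∀ u ∈ Set.Ioi (0:ℝ), 0 < pdf u)
    (hInt : IntegrableOn pdf (Set.Ioo 0 1))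
    (hL : Tendsto (fun u => u * pdf u) (nhdsWithin 0 (Set.Ioi 0)) (nhds L)) : L = 0 := by
  have hL0 : 0 ≤ L := by
    refine ge_of_tendsto hL ?_
    filter_upwards [self_mem_nhdsWithin] with u hu
    exact (mul_pos hu (hpos u hu)).le
  rcases hL0.lt_or_eq with h | h
  · exfalso
    have hev : ∀ᶠ u in nhdsWithin (0:ℝ) (Set.Ioi 0), L / 2 < u * pdf u :=
      hL.eventually (eventually_gt_nhds (by linarith))
    obtain ⟨δ, hδ0, hδ⟩ := mem_nhdsGT_iff_exists_Ioo_subset.mp hev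
    set c := min δ 1 with hcdef
    have hc0 : (0:ℝ) < c := lt_min hδ0 one_pos
    have key : IntegrableOn (fun x : ℝ => x⁻¹) (Set.Ioo 0 c) := by
      refine Integrable.mono ((hInt.mono_set (Ioo_subset_Ioo le_rfl (min_le_right _ _))).const_mul
        (2 / L)) measurable_inv.aestronglyMeasurable ?_
      filter_upwards [ae_restrict_mem measurableSet_Ioo] with x hx
      have hx0 : (0:ℝ) < x := hx.1
      have hbnd : L / 2 < x * pdf x := hδ ⟨hx.1, lt_of_lt_of_le hx.2 (min_le_left _ _)⟩
      have hpx : 0 < pdf x := hpos x hx0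
      have h2L : (0:ℝ) < 2 / L := by positivity
      rw [Real.norm_eq_abs, Real.norm_eq_abs, abs_of_pos (inv_pos.mpr hx0),
        abs_of_pos (mul_pos h2L hpx), inv_eq_one_div, div_le_iff₀ hx0]
      calc (1:ℝ) = 2 / L * (L / 2) := by field_simp
        _ ≤ 2 / L * (x * pdf x) := mul_le_mul_of_nonneg_left hbnd.le h2L.le
        _ = 2 / L * pdf x * x := by ring
    have key' : IntegrableOn (fun x : ℝ => x ^ (-1:ℝ)) (Set.Ioo 0 c) := by
      refine key.congr_fun (fun x hx => ?_) measurableSet_Ioo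
      rw [show x ^ (-1:ℝ) = (x ^ (1:ℝ))⁻¹ from Real.rpow_neg hx.1.le 1, Real.rpow_one]
    rw [intervalIntegral.integrableOn_Ioo_rpow_iff hc0] at key'
    linarith
  · exact h.symm

/-- FTC: if the derivative of `u * pdf u` is integrable on `(a,∞)`, then `u * pdf u`
converges at `+∞`. -/
private lemma tendsto_atTop_of_integrable_gd {pdf : ℝ → ℝ} {a : ℝ} (ha : 0 < a)
    (hC1 : ContDiffOn ℝ 1 pdf (Set.Ioi 0))
    (hgd : IntegrableOn (fun u => pdf u + u * deriv pdf u) (Set.Ioi a)) :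
    Tendsto (fun u => u * pdf u) atTop
      (nhds (a * pdf a + ∫ u in Set.Ioi a, (pdf u + u * deriv pdf u))) := by
  have h1 := intervalIntegral_tendsto_integral_Ioi a hgd tendsto_id
  have key : ∀ b, a ≤ b →
      (∫ u in a..b, (pdf u + u * deriv pdf u)) = b * pdf b - a * pdf a := by
    intro b hb
    have := intervalIntegral.integral_eq_sub_of_hasDerivAt
      (f := fun x => x * pdf x) (f' := fun u => pdf u + u * deriv pdf u)
      (a := a) (b := b) ?_ ?_
    · exact this
    · intro x hx
      rw [uIcc_of_le hb] at hx
      exact upi_hasDeriv hC1 (lt_of_lt_of_le ha hx.1)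
    · rw [intervalIntegrable_iff_integrableOn_Ioc_of_le hb]
      exact hgd.mono_set Ioc_subset_Ioi_self
  have h2 : Tendsto (fun b => a * pdf a + ∫ u in a..b, (pdf u + u * deriv pdf u)) atTop
      (nhds (a * pdf a + ∫ u in Set.Ioi a, (pdf u + u * deriv pdf u))) :=
    tendsto_const_nhds.add h1
  refine h2.congr' ?_
  filter_upwards [eventually_ge_atTop a] with b hb
  rw [key b hb]; ring

theorem u_pi_tendsto_zero
    (pdf : ℝ → ℝ)
    (hpos : ∀ u ∈ Set.Ioi (0:ℝ), 0 < pdf u)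
    (hC1 : ContDiffOn ℝ 1 pdf (Set.Ioi 0))
    (hprob : ∫ u in Set.Ioi (0:ℝ), pdf u = 1)
    (hint : IntegrableOn (fun u => |u * deriv pdf u|) (Set.Ioo (0:ℝ) 1))
    (ξ : EReal)
    (hξ : Filter.Tendsto (fun u : ℝ => ((u * deriv pdf u / pdf u : ℝ) : EReal))
      Filter.atTop (nhds ξ)) :
    Filter.Tendsto (fun u : ℝ => u * pdf u) (nhdsWithin 0 (Set.Ioi 0)) (nhds 0) ∧
      Filter.Tendsto (fun u : ℝ => u * pdf u) Filter.atTop (nhds 0) := by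
  have hInt : IntegrableOn pdf (Set.Ioi 0) := by
    by_contra h
    rw [MeasureTheory.integral_undef h] at hprob
    norm_num at hprob
  -- integrability of u * pdf'(u) on (0,1)
  have hint' : IntegrableOn (fun u : ℝ => u * deriv pdf u) (Set.Ioo 0 1) := by
    refine Integrable.mono hint (pdf_deriv_meas (pdf := pdf)).aestronglyMeasurable ?_
    filter_upwards with x
    rw [Real.norm_eq_abs, Real.norm_eq_abs, abs_abs]
  have hgd01 : IntegrableOn (fun u : ℝ => pdf u + u * deriv pdf u) (Set.Ioo 0 1) :=
    (hInt.mono_set Ioo_subset_Ioi_self).add hint'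
  have hgdIcc : IntegrableOn (fun u : ℝ => pdf u + u * deriv pdf u) (Set.Icc 0 1) := by
    rwa [integrableOn_Icc_iff_integrableOn_Ioo]
  -- Part 1: limit at 0⁺
  have part1 : Tendsto (fun u : ℝ => u * pdf u) (nhdsWithin 0 (Set.Ioi 0)) (nhds 0) := by
    have hIoo_mem : Set.Ioo (0:ℝ) 1 ∈ nhdsWithin (0:ℝ) (Set.Ioi 0) := by
      rw [mem_nhdsGT_iff_exists_Ioo_subset]
      exact ⟨1, Set.mem_Ioi.mpr one_pos, subset_rfl⟩
    have hcont := intervalIntegral.continuousOn_primitive (μ := volume)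
      (a := 0) (b := 1) hgdIcc
    have hF0 : Tendsto (fun x => ∫ t in Set.Ioc 0 x, (pdf t + t * deriv pdf t))
        (nhdsWithin (0:ℝ) (Set.Ioi 0)) (nhds 0) := by
      have h' : Tendsto (fun x => ∫ t in Set.Ioc 0 x, (pdf t + t * deriv pdf t))
          (nhdsWithin (0:ℝ) (Set.Icc 0 1))
          (nhds (∫ t in Set.Ioc (0:ℝ) 0, (pdf t + t * deriv pdf t))) :=
        hcont 0 ⟨le_rfl, zero_le_one⟩
      have hle : nhdsWithin (0:ℝ) (Set.Ioi 0) ≤ nhdsWithin (0:ℝ) (Set.Icc 0 1) :=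
        nhdsWithin_le_of_mem (mem_of_superset hIoo_mem Ioo_subset_Icc_self)
      simpa using h'.mono_left hle
    set C : ℝ := 1 * pdf 1 - ∫ t in (0:ℝ)..1, (pdf t + t * deriv pdf t) with hCdef
    have heq : ∀ u ∈ Set.Ioo (0:ℝ) 1,
        u * pdf u = C + ∫ t in Set.Ioc 0 u, (pdf t + t * deriv pdf t) := by
      intro u hu
      have hii1 : IntervalIntegrable (fun t => pdf t + t * deriv pdf t) volume 0 u := by
        rw [intervalIntegrable_iff_integrableOn_Ioc_of_le hu.1.le]
        exact hgdIcc.mono_set (Ioc_subset_Icc_self.trans (Icc_subset_Icc le_rfl hu.2.le))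
      have hii2 : IntervalIntegrable (fun t => pdf t + t * deriv pdf t) volume u 1 := by
        rw [intervalIntegrable_iff_integrableOn_Ioc_of_le hu.2.le]
        exact hgdIcc.mono_set (Ioc_subset_Icc_self.trans (Icc_subset_Icc hu.1.le le_rfl))
      have hadd := intervalIntegral.integral_add_adjacent_intervals hii1 hii2
      have hftc : (∫ t in u..1, (pdf t + t * deriv pdf t)) = 1 * pdf 1 - u * pdf u := by
        have := intervalIntegral.integral_eq_sub_of_hasDerivAt
          (f := fun x => x * pdf x) (f' := fun t => pdf t + t * deriv pdf t)
          (a := u) (b := 1) ?_ hii2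
        · exact this
        · intro x hx
          rw [uIcc_of_le hu.2.le] at hx
          exact upi_hasDeriv hC1 (lt_of_lt_of_le hu.1 hx.1)
      have h0u : (∫ t in (0:ℝ)..u, (pdf t + t * deriv pdf t))
          = ∫ t in Set.Ioc 0 u, (pdf t + t * deriv pdf t) :=
        intervalIntegral.integral_of_le hu.1.le
      rw [← h0u]
      have h3 : u * pdf u = 1 * pdf 1 - (∫ t in u..1, (pdf t + t * deriv pdf t)) := by
        rw [hftc]; ring
      rw [h3, hCdef, ← hadd]; ring
    have htend : Tendsto (fun u : ℝ => u * pdf u) (nhdsWithin 0 (Set.Ioi 0)) (nhds (C + 0)) := by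
      refine Tendsto.congr' ?_ (tendsto_const_nhds.add hF0)
      filter_upwards [hIoo_mem] with u hu
      exact (heq u hu).symm
    have hC0 : C + 0 = 0 :=
      limit_zero_atZero hpos (hInt.mono_set Ioo_subset_Ioi_self) htend
    rwa [hC0] at htend
  refine ⟨part1, ?_⟩
  -- Part 2: limit at +∞
  induction ξ with
  | bot =>
    have hev : ∀ᶠ u in atTop, ((u * deriv pdf u / pdf u : ℝ) : EReal) < ((-2 : ℝ) : EReal) :=
      hξ.eventually (eventually_lt_nhds (EReal.bot_lt_coe _))
    obtain ⟨a, ha⟩ := eventually_atTop.mp (hev.and (eventually_ge_atTop 1))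
    have ha0 : (0:ℝ) < a := lt_of_lt_of_le one_pos (ha a le_rfl).2
    have key : ∀ u, a ≤ u → u * deriv pdf u ≤ -2 * pdf u := by
      intro u hu
      have hu0 : (0:ℝ) < u := lt_of_lt_of_le ha0 hu
      have hpu := hpos u hu0
      have hr : u * deriv pdf u / pdf u < -2 := EReal.coe_lt_coe_iff.mp (ha u hu).1
      have := (div_lt_iff₀ hpu).mp hr
      linarith
    have hanti : AntitoneOn (fun u => pdf u * u ^ 2) (Set.Ici a) := by
      apply antitoneOn_of_deriv_nonpos (convex_Ici a)
      · exact (hC1.continuousOn.mono (fun x hx => lt_of_lt_of_le ha0 hx)).mul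
          (continuous_pow 2).continuousOn
      · rw [interior_Ici]
        intro x hx
        have hx0 : (0:ℝ) < x := lt_trans ha0 hx
        exact ((((hC1.differentiableOn one_ne_zero) x hx0).differentiableAt
          (Ioi_mem_nhds hx0)).mul (differentiable_pow 2).differentiableAt).differentiableWithinAt
      · rw [interior_Ici]
        intro x hx
        have hx0 : (0:ℝ) < x := lt_trans ha0 hx
        have hd : DifferentiableAt ℝ pdf x :=
          ((hC1.differentiableOn one_ne_zero) x hx0).differentiableAt (Ioi_mem_nhds hx0)
        have hder : HasDerivAt (fun u => pdf u * u ^ 2)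
            (deriv pdf x * x ^ 2 + pdf x * (2 * x)) x := by
          have := hd.hasDerivAt.mul (hasDerivAt_pow 2 x)
          exact this.congr_deriv (by norm_num)
        rw [hder.deriv]
        have hk := key x hx.le
        nlinarith [mul_le_mul_of_nonneg_left hk hx0.le]
    have hub : ∀ᶠ u in atTop, u * pdf u ≤ (pdf a * a ^ 2) * u⁻¹ := by
      filter_upwards [eventually_ge_atTop a] with u hu
      have hu0 : (0:ℝ) < u := lt_of_lt_of_le ha0 hu
      have h1 : pdf u * u ^ 2 ≤ pdf a * a ^ 2 := hanti self_mem_Ici hu hu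
      have h2 : (pdf a * a ^ 2) * u⁻¹ = (pdf a * a ^ 2) / u := by
        rw [div_eq_mul_inv]
      rw [h2, le_div_iff₀ hu0]
      nlinarith
    have hupper : Tendsto (fun u : ℝ => (pdf a * a ^ 2) * u⁻¹) atTop (nhds 0) := by
      have := tendsto_inv_atTop_zero.const_mul (pdf a * a ^ 2)
      simpa using this
    refine tendsto_of_tendsto_of_tendsto_of_le_of_le' tendsto_const_nhds hupper ?_ hub
    filter_upwards [eventually_gt_atTop (0:ℝ)] with u hu
    exact (mul_pos hu (hpos u hu)).le
  | coe x =>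
    have hrt : Tendsto (fun u : ℝ => u * deriv pdf u / pdf u) atTop (nhds x) :=
      EReal.tendsto_coe.mp hξ
    have hev : ∀ᶠ u in atTop, |u * deriv pdf u / pdf u - x| < 1 := by
      have := hrt.eventually (Metric.ball_mem_nhds x one_pos)
      filter_upwards [this] with u hu
      simpa [Real.dist_eq] using hu
    obtain ⟨a, ha⟩ := eventually_atTop.mp (hev.and (eventually_ge_atTop 1))
    have ha0 : (0:ℝ) < a := lt_of_lt_of_le one_pos (ha a le_rfl).2
    have hgdA : IntegrableOn (fun u : ℝ => pdf u + u * deriv pdf u) (Set.Ioi a) := by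
      refine Integrable.mono ((hInt.mono_set (Ioi_subset_Ioi ha0.le)).const_mul (2 + |x|))
        (((hInt.mono_set (Ioi_subset_Ioi ha0.le)).aestronglyMeasurable).add
          (pdf_deriv_meas (pdf := pdf)).aestronglyMeasurable) ?_
      filter_upwards [ae_restrict_mem measurableSet_Ioi] with u hu
      have hu0 : (0:ℝ) < u := lt_trans ha0 hu
      have hpu : 0 < pdf u := hpos u hu0
      have hr := (ha u hu.le).1
      have hfac : pdf u + u * deriv pdf u = pdf u * (1 + u * deriv pdf u / pdf u) := by
        field_simp
      rw [Real.norm_eq_abs, Real.norm_eq_abs, hfac, abs_mul, abs_of_pos hpu,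
        abs_of_pos (mul_pos (by positivity : (0:ℝ) < 2 + |x|) hpu)]
      have hbd : |1 + u * deriv pdf u / pdf u| ≤ 2 + |x| := by
        have h2 : |u * deriv pdf u / pdf u| ≤ |x| + 1 := by
          have := abs_sub_abs_le_abs_sub (u * deriv pdf u / pdf u) x
          linarith [hr]
        calc |1 + u * deriv pdf u / pdf u| ≤ |(1:ℝ)| + |u * deriv pdf u / pdf u| := abs_add_le _ _
          _ ≤ 1 + (|x| + 1) := by rw [abs_one]; linarith
          _ = 2 + |x| := by ring
      calc pdf u * |1 + u * deriv pdf u / pdf u| ≤ pdf u * (2 + |x|) :=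
            mul_le_mul_of_nonneg_left hbd hpu.le
        _ = (2 + |x|) * pdf u := by ring
    have htend := tendsto_atTop_of_integrable_gd ha0 hC1 hgdA
    have hL0 := limit_zero_atTop ha0 hpos (hInt.mono_set (Ioi_subset_Ioi ha0.le)) htend
    rwa [hL0] at htend
  | top =>
    exfalso
    have hev : ∀ᶠ u in atTop, ((0:ℝ) : EReal) < ((u * deriv pdf u / pdf u : ℝ) : EReal) :=
      hξ.eventually (eventually_gt_nhds (EReal.coe_lt_top _))
    obtain ⟨a, ha⟩ := eventually_atTop.mp (hev.and (eventually_ge_atTop 1))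
    have ha0 : (0:ℝ) < a := lt_of_lt_of_le one_pos (ha a le_rfl).2
    have hderiv_pos : ∀ x ∈ Set.Ioi a, 0 ≤ deriv pdf x := by
      intro x hx
      have hx0 : (0:ℝ) < x := lt_trans ha0 hx
      have hpx : 0 < pdf x := hpos x hx0
      have hr : (0:ℝ) < x * deriv pdf x / pdf x := EReal.coe_lt_coe_iff.mp (ha x (le_of_lt hx)).1
      have hxd : 0 < x * deriv pdf x := by
        by_contra hc
        push_neg at hc
        have : x * deriv pdf x / pdf x ≤ 0 := div_nonpos_iff.mpr (Or.inr ⟨hc, hpx.le⟩)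
        linarith
      nlinarith
    have hmono : MonotoneOn pdf (Set.Ici a) := by
      apply monotoneOn_of_deriv_nonneg (convex_Ici a)
      · exact hC1.continuousOn.mono (fun x hx => lt_of_lt_of_le ha0 hx)
      · rw [interior_Ici]
        intro x hx
        exact (((hC1.differentiableOn one_ne_zero) x (lt_trans ha0 hx)).differentiableAt
          (Ioi_mem_nhds (lt_trans ha0 hx))).differentiableWithinAt
      · rw [interior_Ici]
        exact hderiv_pos
    have hconst : IntegrableOn (fun _ : ℝ => pdf a) (Set.Ioi a) := by
      refine Integrable.mono (hInt.mono_set (Ioi_subset_Ioi ha0.le))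
        aestronglyMeasurable_const ?_
      filter_upwards [ae_restrict_mem measurableSet_Ioi] with u hu
      have hu0 : (0:ℝ) < u := lt_trans ha0 hu
      have hle : pdf a ≤ pdf u := hmono self_mem_Ici (show a ≤ u from le_of_lt hu) (le_of_lt hu)
      rw [Real.norm_eq_abs, Real.norm_eq_abs, abs_of_pos (hpos a ha0),
        abs_of_pos (hpos u hu0)]
      exact hle
    rw [integrableOn_const_iff] at hconst
    rcases hconst with h | h
    · exact absurd (enorm_eq_zero.mp h) (ne_of_gt (hpos a ha0))
    · rw [Real.volume_Ioi] at h
      exact absurd h (by simp)
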